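/- Let Pr_T(x) be a provability predicate of T satisfying condition D2, and let Θ and Γ be classes of formulas such that every sentence Pr_T(⌜φ⌝) is in Θ(T), Θ(T) ⊆ Γ(T), and Γ(T) is closed under taking disjunction. Then T + Rfn(Pr_T) is Γ-conservative over T + Rfn_Γ(Pr_T). -/

import Mathlib

/-
Self-contained formalization of the background theory (following Kurahashi–?,
"local reflection principles and Rosser provability predicates").

We work with the first-order language of arithmetic `LA` (0, S, +, ·, ≤),
deeply embedded via Mathlib's `FirstOrder.Language` framework.

* Provability `Prv T φ` is rendered as semantic consequence `T ⊨ᵇ φ`, which by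
  the Gödel completeness theorem coincides with provability in first-order logic.
* `PAAxioms` is Peano Arithmetic: the basic axioms together with the full
  induction scheme.
* A "formula" (possibly with free variables) is an element of
  `AFml := Σ n, LA.BoundedFormula Empty n` (free variables are de Bruijn style);
  a sentence is a formula with `n = 0`.
* `gnum` is a fixed (injective) Gödel numbering of formulas; `⌜φ⌝` is rendered
  as `numeral (gnum ⟨n, φ⟩)`.
* The arithmetical hierarchy `IsDelta0`, `IsSigma n`, `IsPi n` is defined
  exactly as in the paper (Σ₀ = Π₀ = bounded-quantifier formulas, and the
  inductive clauses for Σ_{n+1}, Π_{n+1}).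
* Witness comparison `WLt` (≺) and `WLe` (≼) are defined literally.
* A proof predicate of `T` is a Δ₁(PA) formula `Prf(x, y)` such that
  `T ⊢ φ iff ℕ ⊨ ∃y Prf(⌜φ⌝, y)` and PA proves that each proof proves a
  unique formula ("single conclusion", formulated via uniqueness).
* `ProvS Prf φ` is the sentence `∃y Prf(⌜φ⌝, y)` and `RosserS Prf φ` is the
  Rosser sentence `Prv(⌜φ⌝) ≺ Prv(⌜¬φ⌝)`.
* `IsCanonicalProvability T P` captures the properties of Gödel's canonical
  proof predicate used in the paper: it is a proof predicate whose provability
  predicate satisfies the Hilbert–Bernays–Löb derivability conditions and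
  formalized Σ₁-completeness.  (This also encodes that `T` is recursively
  axiomatized.)
-/

open FirstOrder Language

/-! ### The language of arithmetic -/

inductive ArithFunc : ℕ → Type
  | zero : ArithFunc 0
  | succ : ArithFunc 1
  | add : ArithFunc 2
  | mul : ArithFunc 2

inductive ArithRel : ℕ → Type
  | le : ArithRel 2

abbrev LA : Language := ⟨ArithFunc, ArithRel⟩

def funcCode : (Σ l, ArithFunc l) → ℕ
  | ⟨_, .zero⟩ => 0
  | ⟨_, .succ⟩ => 1
  | ⟨_, .add⟩ => 2
  | ⟨_, .mul⟩ => 3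

instance : Countable ((l : ℕ) × LA.Functions l) :=
  ⟨⟨funcCode, by rintro ⟨l₁, f₁⟩ ⟨l₂, f₂⟩ h; cases f₁ <;> cases f₂ <;> simp_all [funcCode]⟩⟩

instance : Countable ((l : ℕ) × LA.Relations l) :=
  ⟨⟨fun _ => 0, by rintro ⟨l₁, r₁⟩ ⟨l₂, r₂⟩ _; cases r₁; cases r₂; rfl⟩⟩

/-- The standard model ℕ of arithmetic. -/
instance : LA.Structure ℕ where
  funMap {n} f v :=
    match f with
    | .zero => 0
    | .succ => v 0 + 1
    | .add => v 0 + v 1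
    | .mul => v 0 * v 1
  RelMap {n} r v :=
    match r with
    | .le => v 0 ≤ v 1

/-! ### Terms -/

def zeroT {α : Type} : LA.Term α := Constants.term ArithFunc.zero

def sT {α : Type} (t : LA.Term α) : LA.Term α := Functions.apply₁ ArithFunc.succ t

def addT {α : Type} (t u : LA.Term α) : LA.Term α := Functions.apply₂ ArithFunc.add t u

def mulT {α : Type} (t u : LA.Term α) : LA.Term α := Functions.apply₂ ArithFunc.mul t u

/-- The numeral `n̄`. -/
def numeral {α : Type} : ℕ → LA.Term α
  | 0 => zeroT
  | n + 1 => sT (numeral n)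

/-- The atomic formula `t ≤ u`. -/
def leF {α : Type} {n : ℕ} (t u : LA.Term (α ⊕ Fin n)) : LA.BoundedFormula α n :=
  Relations.boundedFormula₂ ArithRel.le t u

/-! ### Provability (via the completeness theorem, as semantic consequence) -/

/-- `Prv T φ` : the theory `T` proves the formula `φ` (free variables read
universally).  By Gödel's completeness theorem this coincides with provability
in first-order logic.  -/
def Prv {α : Type} {n : ℕ} (T : LA.Theory) (φ : LA.BoundedFormula α n) : Prop :=
  T ⊨ᵇ φ

/-! ### Peano Arithmetic -/

/-- Substitute the term `t` (over the remaining `k` variables) for the last de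
Bruijn variable of `φ`. -/
def substLastK {k : ℕ} (φ : LA.BoundedFormula Empty (k + 1))
    (t : LA.Term (Empty ⊕ Fin k)) : LA.BoundedFormula Empty k :=
  (φ.toFormula.subst
    (Sum.elim (fun e => e.elim)
      (fun j : Fin (k + 1) =>
        if h : (j : ℕ) < k then Term.var (Sum.inr ⟨j, h⟩) else t))).relabel id

/-- Substitute the term `t` (over all `k+1` variables) for the last de Bruijn
variable of `φ`. -/
def substLastS {k : ℕ} (φ : LA.BoundedFormula Empty (k + 1))
    (t : LA.Term (Empty ⊕ Fin (k + 1))) : LA.BoundedFormula Empty (k + 1) :=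
  (φ.toFormula.subst
    (Sum.elim (fun e => e.elim)
      (fun j : Fin (k + 1) =>
        if (j : ℕ) < k then Term.var (Sum.inr j) else t))).relabel id

/-- The induction axiom for `φ(x, y₁, …, y_k)`:
`∀ȳ (φ(0, ȳ) ∧ ∀x(φ(x, ȳ) → φ(Sx, ȳ)) → ∀x φ(x, ȳ))`. -/
def indAx (k : ℕ) (φ : LA.BoundedFormula Empty (k + 1)) : LA.Sentence :=
  BoundedFormula.alls
    ((substLastK φ zeroT ⊓
        ∀' (φ ⟹ substLastS φ (sT (Term.var (Sum.inr (Fin.last k)))))) ⟹ ∀' φ)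

/-- The finitely many basic axioms of PA. -/
def PABase : LA.Theory :=
  { ∀' ∼(sT &0 =' zeroT),
    ∀' ∀' ((sT &0 =' sT &1) ⟹ (&0 =' &1)),
    ∀' (addT &0 zeroT =' &0),
    ∀' ∀' (addT &0 (sT &1) =' sT (addT &0 &1)),
    ∀' (mulT &0 zeroT =' zeroT),
    ∀' ∀' (mulT &0 (sT &1) =' addT (mulT &0 &1) &0),
    ∀' ∀' (leF &0 &1 ⇔ ∃' (addT &2 &0 =' &1)) }

/-- Peano Arithmetic: basic axioms plus full induction. -/
def PAAxioms : LA.Theory :=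
  PABase ∪ { s | ∃ (k : ℕ) (φ : LA.BoundedFormula Empty (k + 1)), s = indAx k φ }

/-! ### The arithmetical hierarchy -/

/-- Δ₀(=Σ₀=Π₀) formulas: every quantifier is bounded. -/
inductive IsDelta0 {α : Type} : {n : ℕ} → LA.BoundedFormula α n → Prop
  | falsum {n : ℕ} : IsDelta0 (⊥ : LA.BoundedFormula α n)
  | equal {n : ℕ} (t u : LA.Term (α ⊕ Fin n)) : IsDelta0 (t.bdEqual u)
  | rel {n l : ℕ} (R : LA.Relations l) (ts : Fin l → LA.Term (α ⊕ Fin n)) :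
      IsDelta0 (R.boundedFormula ts)
  | not {n : ℕ} {φ : LA.BoundedFormula α n} : IsDelta0 φ → IsDelta0 (∼φ)
  | and {n : ℕ} {φ ψ : LA.BoundedFormula α n} : IsDelta0 φ → IsDelta0 ψ → IsDelta0 (φ ⊓ ψ)
  | or {n : ℕ} {φ ψ : LA.BoundedFormula α n} : IsDelta0 φ → IsDelta0 ψ → IsDelta0 (φ ⊔ ψ)
  | imp {n : ℕ} {φ ψ : LA.BoundedFormula α n} : IsDelta0 φ → IsDelta0 ψ → IsDelta0 (φ ⟹ ψ)
  | bdAll {n : ℕ} (t : LA.Term (α ⊕ Fin n)) {φ : LA.BoundedFormula α (n + 1)} :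
      IsDelta0 φ →
      IsDelta0 (∀' (leF (Term.var (Sum.inr (Fin.last n)))
        (t.relabel (Sum.map id Fin.castSucc)) ⟹ φ))
  | bdEx {n : ℕ} (t : LA.Term (α ⊕ Fin n)) {φ : LA.BoundedFormula α (n + 1)} :
      IsDelta0 φ →
      IsDelta0 (∃' (leF (Term.var (Sum.inr (Fin.last n)))
        (t.relabel (Sum.map id Fin.castSucc)) ⊓ φ))

mutual
  /-- The class Σ_k of arithmetical formulas (as defined in the paper). -/
  inductive IsSigma {α : Type} : ℕ → {n : ℕ} → LA.BoundedFormula α n → Prop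
    | delta0 {n : ℕ} {φ : LA.BoundedFormula α n} : IsDelta0 φ → IsSigma 0 φ
    | ofSigma {k n : ℕ} {φ : LA.BoundedFormula α n} : IsSigma k φ → IsSigma (k + 1) φ
    | ofPi {k n : ℕ} {φ : LA.BoundedFormula α n} : IsPi k φ → IsSigma (k + 1) φ
    | and {k n : ℕ} {φ ψ : LA.BoundedFormula α n} :
        IsSigma (k + 1) φ → IsSigma (k + 1) ψ → IsSigma (k + 1) (φ ⊓ ψ)
    | or {k n : ℕ} {φ ψ : LA.BoundedFormula α n} :
        IsSigma (k + 1) φ → IsSigma (k + 1) ψ → IsSigma (k + 1) (φ ⊔ ψ)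
    | ex {k n : ℕ} {φ : LA.BoundedFormula α (n + 1)} :
        IsSigma (k + 1) φ → IsSigma (k + 1) (∃' φ)
    | not {k n : ℕ} {φ : LA.BoundedFormula α n} : IsPi (k + 1) φ → IsSigma (k + 1) (∼φ)
    | imp {k n : ℕ} {φ ψ : LA.BoundedFormula α n} :
        IsPi (k + 1) φ → IsSigma (k + 1) ψ → IsSigma (k + 1) (φ ⟹ ψ)

  /-- The class Π_k of arithmetical formulas (as defined in the paper). -/
  inductive IsPi {α : Type} : ℕ → {n : ℕ} → LA.BoundedFormula α n → Prop
    | delta0 {n : ℕ} {φ : LA.BoundedFormula α n} : IsDelta0 φ → IsPi 0 φ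
    | ofSigma {k n : ℕ} {φ : LA.BoundedFormula α n} : IsSigma k φ → IsPi (k + 1) φ
    | ofPi {k n : ℕ} {φ : LA.BoundedFormula α n} : IsPi k φ → IsPi (k + 1) φ
    | and {k n : ℕ} {φ ψ : LA.BoundedFormula α n} :
        IsPi (k + 1) φ → IsPi (k + 1) ψ → IsPi (k + 1) (φ ⊓ ψ)
    | or {k n : ℕ} {φ ψ : LA.BoundedFormula α n} :
        IsPi (k + 1) φ → IsPi (k + 1) ψ → IsPi (k + 1) (φ ⊔ ψ)
    | all {k n : ℕ} {φ : LA.BoundedFormula α (n + 1)} :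
        IsPi (k + 1) φ → IsPi (k + 1) (∀' φ)
    | not {k n : ℕ} {φ : LA.BoundedFormula α n} : IsSigma (k + 1) φ → IsPi (k + 1) (∼φ)
    | imp {k n : ℕ} {φ ψ : LA.BoundedFormula α n} :
        IsSigma (k + 1) φ → IsPi (k + 1) ψ → IsPi (k + 1) (φ ⟹ ψ)
end

/-- The set of Σ_n sentences. -/
def SigmaClass (n : ℕ) : Set LA.Sentence := { φ | IsSigma n φ }

/-- The set of Π_n sentences. -/
def PiClass (n : ℕ) : Set LA.Sentence := { φ | IsPi n φ }

/-- `Γ ∈ {Σ_n, Π_n | n ≥ 1}`. -/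
def IsLevel (Γ : Set LA.Sentence) : Prop :=
  ∃ n, 1 ≤ n ∧ (Γ = SigmaClass n ∨ Γ = PiClass n)

/-- `(Γ, Γᵈ)` is a dual pair from `{Σ_n, Π_n | n ≥ 1}`. -/
def DualPair (Γ Γd : Set LA.Sentence) : Prop :=
  ∃ n, 1 ≤ n ∧ ((Γ = SigmaClass n ∧ Γd = PiClass n) ∨ (Γ = PiClass n ∧ Γd = SigmaClass n))

/-- Boolean combinations of Σ₁ sentences. -/
inductive IsBSigma1 : LA.Sentence → Prop
  | base {φ : LA.Sentence} : IsSigma 1 φ → IsBSigma1 φ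
  | not {φ : LA.Sentence} : IsBSigma1 φ → IsBSigma1 (∼φ)
  | and {φ ψ : LA.Sentence} : IsBSigma1 φ → IsBSigma1 ψ → IsBSigma1 (φ ⊓ ψ)
  | or {φ ψ : LA.Sentence} : IsBSigma1 φ → IsBSigma1 ψ → IsBSigma1 (φ ⊔ ψ)
  | imp {φ ψ : LA.Sentence} : IsBSigma1 φ → IsBSigma1 ψ → IsBSigma1 (φ ⟹ ψ)

/-- The class B(Σ₁) of Boolean combinations of Σ₁ sentences. -/
def BSigma1Class : Set LA.Sentence := { φ | IsBSigma1 φ }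

/-! ### Formulas and Gödel numbering -/

/-- The type of L_A-formulas: a formula with `n` (de Bruijn style) free
variables is an element of `LA.BoundedFormula Empty n`; sentences are the
formulas with `n = 0`. -/
abbrev AFml : Type := Σ n : ℕ, LA.BoundedFormula Empty n

/-- Negation of a formula. -/
def Fneg (F : AFml) : AFml := ⟨F.1, ∼F.2⟩

instance : Countable AFml :=
  Function.Injective.countable BoundedFormula.listEncode_sigma_injective

/-- A fixed injective Gödel numbering of formulas. -/
noncomputable def gnum : AFml → ℕ := (nonempty_embedding_nat AFml).some

/-! ### Witness comparison -/

/-- `(∃x φ) ≺ (∃x ψ)  :≡  ∃x (φ(x) ∧ ∀y ≤ x ¬ψ(y))`. -/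
def WLt {α : Type} (φ ψ : LA.BoundedFormula α 1) : LA.BoundedFormula α 0 :=
  ∃' (φ ⊓ ∀' (leF (Term.var (Sum.inr 1)) (Term.var (Sum.inr 0)) ⟹ ∼(ψ.liftAt 1 0)))

/-- `(∃x φ) ≼ (∃x ψ)  :≡  ∃x (φ(x) ∧ ∀y < x ¬ψ(y))`. -/
def WLe {α : Type} (φ ψ : LA.BoundedFormula α 1) : LA.BoundedFormula α 0 :=
  ∃' (φ ⊓ ∀' ((leF (Term.var (Sum.inr 1)) (Term.var (Sum.inr 0)) ⊓
      ∼(Term.bdEqual (Term.var (Sum.inr 1)) (Term.var (Sum.inr 0)))) ⟹ ∼(ψ.liftAt 1 0)))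

/-! ### Proof predicates, provability predicates and Rosser predicates -/

/-- Plug the terms `t`, `u` into the two free variables of the formula `P`. -/
def instF {n : ℕ} (P : LA.Formula (Fin 2)) (t u : LA.Term (Empty ⊕ Fin n)) :
    LA.BoundedFormula Empty n :=
  (P.subst ![t, u]).relabel id

/-- `Prf(c̄, y)` with `y` the remaining (de Bruijn) free variable. -/
noncomputable def PrfInst (P : LA.Formula (Fin 2)) (c : ℕ) : LA.BoundedFormula Empty 1 :=
  instF P (numeral c) (Term.var (Sum.inr 0))

/-- The sentence `∃y Prf(c̄, y)`. -/
noncomputable def ProvInst (P : LA.Formula (Fin 2)) (c : ℕ) : LA.Sentence :=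
  ∃' PrfInst P c

/-- `Pr(⌜F⌝)` for a formula `F`. -/
noncomputable def PrAt (P : LA.Formula (Fin 2)) (F : AFml) : LA.Sentence :=
  ProvInst P (gnum F)

/-- `Pr(⌜φ⌝)` for a sentence `φ`. -/
noncomputable def ProvS (P : LA.Formula (Fin 2)) (φ : LA.Sentence) : LA.Sentence :=
  PrAt P ⟨0, φ⟩

/-- The Rosser provability sentence `Pr(⌜F⌝) ≺ Pr(⌜¬F⌝)` associated with the
proof predicate `P`. -/
noncomputable def RosserAt (P : LA.Formula (Fin 2)) (F : AFml) : LA.Sentence :=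
  WLt (PrfInst P (gnum F)) (PrfInst P (gnum (Fneg F)))

/-- `Pr^R(⌜φ⌝)` for a sentence `φ`. -/
noncomputable def RosserS (P : LA.Formula (Fin 2)) (φ : LA.Sentence) : LA.Sentence :=
  RosserAt P ⟨0, φ⟩

/-- `∀y ∀x ∀x' (Prf(x, y) ∧ Prf(x', y) → x = x')` : each proof proves at most
one formula; together with `∃x Prf(x,y)` this is the single-conclusion
condition `∀y (∃x Prf(x,y) → ∃!x Prf(x,y))`. -/
def uniqueProofS (P : LA.Formula (Fin 2)) : LA.Sentence :=
  ∀' ∀' ∀' ((instF P (Term.var (Sum.inr 1)) (Term.var (Sum.inr 0)) ⊓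
      instF P (Term.var (Sum.inr 2)) (Term.var (Sum.inr 0))) ⟹
    Term.bdEqual (Term.var (Sum.inr 1)) (Term.var (Sum.inr 2)))

/-- The sentence `0 = 1`. -/
def zeroEqOne : LA.Sentence := Term.bdEqual (numeral 0) (numeral 1)

/-- The sentence `0 = 0`. -/
def zeroEqZero : LA.Sentence := Term.bdEqual (numeral 0) (numeral 0)

/-- `P` is a proof predicate of `T`: it is Δ₁(PA), it numerates the theorems of
`T` in ℕ, and provably in PA it is single-conclusion. -/
structure IsProofPredicate (T : LA.Theory) (P : LA.Formula (Fin 2)) : Prop where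
  sigma1 : IsSigma 1 P
  delta1 : ∃ π : LA.Formula (Fin 2), IsPi 1 π ∧ Prv PAAxioms (P ⇔ π)
  represents : ∀ φ : LA.Sentence, Prv T φ ↔ ℕ ⊨ ProvS P φ
  single_conclusion : Prv PAAxioms (uniqueProofS P)

/-- The consistency statement `Con_T := ¬Pr(⌜0=1⌝)`. -/
noncomputable def ConS (P : LA.Formula (Fin 2)) : LA.Sentence := ∼(ProvS P zeroEqOne)

/-- Iterated consistency: `Con⁰ := (0=0)`, `Con^{n+1} := ¬Pr(⌜¬Conⁿ⌝)`. -/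
noncomputable def ConIter (P : LA.Formula (Fin 2)) : ℕ → LA.Sentence
  | 0 => zeroEqZero
  | n + 1 => ∼(ProvS P (∼(ConIter P n)))

/-- Condition D2 for the predicate with instances `PrA`:
`U ⊢ Pr(⌜φ → ψ⌝) → (Pr(⌜φ⌝) → Pr(⌜ψ⌝))` for all formulas `φ, ψ`. -/
def CondD2 (U : LA.Theory) (PrA : AFml → LA.Sentence) : Prop :=
  ∀ (n : ℕ) (φ ψ : LA.BoundedFormula Empty n),
    Prv U (PrA ⟨n, φ ⟹ ψ⟩ ⟹ (PrA ⟨n, φ⟩ ⟹ PrA ⟨n, ψ⟩))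

/-- Condition C1: `T ⊢ ¬Con_T → Pr^R(⌜φ⌝) ∨ Pr^R(⌜¬φ⌝)` for all formulas `φ`
(`Con_T` is formulated with the canonical proof predicate `Pc`). -/
noncomputable def CondC1 (T : LA.Theory) (Pc : LA.Formula (Fin 2))
    (PrA : AFml → LA.Sentence) : Prop :=
  ∀ F : AFml, Prv T (∼(ConS Pc) ⟹ (PrA F ⊔ PrA (Fneg F)))

/-- Condition C2: `T ⊢ ¬(Pr^R(⌜φ⌝) ∧ Pr^R(⌜¬φ⌝))` for all formulas `φ`. -/
def CondC2 (T : LA.Theory) (PrA : AFml → LA.Sentence) : Prop :=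
  ∀ F : AFml, Prv T (∼(PrA F ⊓ PrA (Fneg F)))

/-- `P` is (a predicate with all the characteristic properties of) the
canonical proof predicate of `T`: a proof predicate whose provability
predicate satisfies the derivability conditions D1–D3 and formalized
Σ₁-completeness. -/
structure IsCanonicalProvability (T : LA.Theory) (P : LA.Formula (Fin 2)) : Prop where
  isProofPredicate : IsProofPredicate T P
  D1 : ∀ φ : LA.Sentence, Prv T φ → Prv T (ProvS P φ)
  D2 : CondD2 T (PrAt P)
  D3 : ∀ φ : LA.Sentence, Prv T (ProvS P φ ⟹ ProvS P (ProvS P φ))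
  sigma1_completeness : ∀ φ : LA.Sentence, IsSigma 1 φ → Prv T (φ ⟹ ProvS P φ)

/-! ### Reflection principles, conservativity, soundness -/

/-- The Γ local reflection principle for the predicate with instances `Pr`. -/
def Rfn (Pr : LA.Sentence → LA.Sentence) (Γ : Set LA.Sentence) : LA.Theory :=
  { s | ∃ φ ∈ Γ, s = Pr φ ⟹ φ }

/-- The full local reflection principle `⋃_{n ≥ 1} Rfn_{Σ_n}`. -/
def RfnAll (Pr : LA.Sentence → LA.Sentence) : LA.Theory :=
  { s | ∃ n, 1 ≤ n ∧ ∃ φ ∈ SigmaClass n, s = Pr φ ⟹ φ }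

/-- `S` is Γ-conservative over `U`. -/
def ConservOver (Γ : Set LA.Sentence) (S U : LA.Theory) : Prop :=
  ∀ φ ∈ Γ, Prv S φ → Prv U φ

/-- `T` is Σ₁-sound. -/
def Sigma1Sound (T : LA.Theory) : Prop :=
  ∀ φ ∈ SigmaClass 1, Prv T φ → ℕ ⊨ φ

/-- `U ⊢ S` : every axiom of the theory `S` is provable in `U`. -/
def ProvesTheory (U S : LA.Theory) : Prop := ∀ φ ∈ S, Prv U φ

/-- `Γ(T) := {φ | T ⊢ φ ↔ ψ for some ψ ∈ Γ}`. -/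
def GammaT (T : LA.Theory) (Γ : Set LA.Sentence) : Set LA.Sentence :=
  { φ | ∃ ψ ∈ Γ, Prv T (φ ⇔ ψ) }


/-! ### Auxiliary development for the proof -/

namespace ConsAux

open FirstOrder Language BoundedFormula

/-! #### Semantic provability helpers -/

lemma prv_apply {U : LA.Theory} {σ : LA.Sentence} (h : Prv U σ) (N : Type)
    [LA.Structure N] [Nonempty N] (hN : N ⊨ U) : N ⊨ σ := by
  haveI := hN
  have h' : U ⊨ᵇ σ := h
  exact Theory.models_sentence_iff.{0,0}.mp h' (Theory.ModelType.of U N)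

lemma prv_of {U : LA.Theory} {σ : LA.Sentence}
    (h : ∀ (N : Type) [LA.Structure N] [Nonempty N], N ⊨ U → N ⊨ σ) : Prv U σ := by
  show U ⊨ᵇ σ
  refine Theory.models_sentence_iff.{0,0}.mpr ?_
  intro M
  exact h M M.is_model

/-! #### Arithmetic operations in a structure -/

section Ops

variable (N : Type) [LA.Structure N]

def mZ : N := Structure.funMap (L := LA) ArithFunc.zero ![]

variable {N}

def mS (a : N) : N := Structure.funMap (L := LA) ArithFunc.succ ![a]

def mAdd (a b : N) : N := Structure.funMap (L := LA) ArithFunc.add ![a, b]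

def mMul (a b : N) : N := Structure.funMap (L := LA) ArithFunc.mul ![a, b]

def mLe (a b : N) : Prop := Structure.RelMap (L := LA) ArithRel.le ![a, b]

@[simp] lemma realize_zeroT {α : Type} (v : α → N) :
    Term.realize v (zeroT : LA.Term α) = mZ N := by
  rw [zeroT, Term.realize_constants]
  show Structure.funMap (L := LA) ArithFunc.zero default = mZ N
  rw [mZ]
  congr 1

@[simp] lemma realize_sT {α : Type} (v : α → N) (t : LA.Term α) :
    Term.realize v (sT t) = mS (t.realize v) := by
  rw [sT, Term.realize_functions_apply₁]; rfl

@[simp] lemma realize_addT {α : Type} (v : α → N) (t u : LA.Term α) :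
    Term.realize v (addT t u) = mAdd (t.realize v) (u.realize v) := by
  rw [addT, Term.realize_functions_apply₂]; rfl

@[simp] lemma realize_mulT {α : Type} (v : α → N) (t u : LA.Term α) :
    Term.realize v (mulT t u) = mMul (t.realize v) (u.realize v) := by
  rw [mulT, Term.realize_functions_apply₂]; rfl

@[simp] lemma realize_leF {α : Type} {n : ℕ} (v : α → N) (xs : Fin n → N)
    (t u : LA.Term (α ⊕ Fin n)) :
    (leF t u).Realize v xs ↔ mLe (t.realize (Sum.elim v xs)) (u.realize (Sum.elim v xs)) := by
  rw [leF, BoundedFormula.realize_rel₂]; rfl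

/-- The canonical embedding of ℕ into a structure. -/
def emb : ℕ → N
  | 0 => mZ N
  | n + 1 => mS (emb n)

@[simp] lemma realize_numeral {α : Type} (v : α → N) (n : ℕ) :
    Term.realize v (numeral n : LA.Term α) = emb n := by
  induction n with
  | zero => simp [numeral, emb]
  | succ n ih => rw [numeral, realize_sT, ih]; rfl

@[simp] lemma mZ_nat : mZ ℕ = 0 := rfl
@[simp] lemma mS_nat (a : ℕ) : mS a = a + 1 := rfl
@[simp] lemma mAdd_nat (a b : ℕ) : mAdd a b = a + b := rfl
@[simp] lemma mMul_nat (a b : ℕ) : mMul a b = a * b := rfl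
@[simp] lemma mLe_nat (a b : ℕ) : mLe a b ↔ a ≤ b := Iff.rfl

@[simp] lemma emb_nat (n : ℕ) : emb n = n := by
  induction n with
  | zero => rfl
  | succ n ih => show mS (emb n) = n + 1; rw [ih]; rfl

end Ops


/-! #### Models of PA -/

section PAmodel

variable {N : Type} [LA.Structure N] [PAAxioms.Model N]

lemma pa_realize {σ : LA.Sentence} (h : σ ∈ PAAxioms) : N ⊨ σ :=
  Theory.realize_sentence_of_mem PAAxioms h

lemma base_realize {σ : LA.Sentence} (h : σ ∈ PABase) : N ⊨ σ :=
  pa_realize (Set.mem_union_left _ h)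

lemma succ_ne_zero (a : N) : mS a ≠ mZ N := by
  have h := base_realize (N := N) (σ := ∀' ∼(sT &0 =' zeroT)) (by simp [PABase])
  simpa [Sentence.Realize, Formula.Realize, Fin.snoc] using h a

lemma succ_inj {a b : N} (h : mS a = mS b) : a = b := by
  have h' := base_realize (N := N) (σ := ∀' ∀' ((sT &0 =' sT &1) ⟹ (&0 =' &1))) (by simp [PABase])
  have h2 := h' a b
  simp [Sentence.Realize, Formula.Realize, Fin.snoc] at h2
  exact h2 h

lemma add_zero' (a : N) : mAdd a (mZ N) = a := by
  have h := base_realize (N := N) (σ := ∀' (addT &0 zeroT =' &0)) (by simp [PABase])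
  simpa [Sentence.Realize, Formula.Realize, Fin.snoc] using h a

lemma add_succ' (a b : N) : mAdd a (mS b) = mS (mAdd a b) := by
  have h := base_realize (N := N) (σ := ∀' ∀' (addT &0 (sT &1) =' sT (addT &0 &1)))
    (by simp [PABase])
  simpa [Sentence.Realize, Formula.Realize, Fin.snoc] using h a b

lemma mul_zero' (a : N) : mMul a (mZ N) = mZ N := by
  have h := base_realize (N := N) (σ := ∀' (mulT &0 zeroT =' zeroT)) (by simp [PABase])
  simpa [Sentence.Realize, Formula.Realize, Fin.snoc] using h a

lemma mul_succ' (a b : N) : mMul a (mS b) = mAdd (mMul a b) a := by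
  have h := base_realize (N := N) (σ := ∀' ∀' (mulT &0 (sT &1) =' addT (mulT &0 &1) &0))
    (by simp [PABase])
  simpa [Sentence.Realize, Formula.Realize, Fin.snoc] using h a b

lemma le_iff' (a b : N) : mLe a b ↔ ∃ z, mAdd z a = b := by
  have h := base_realize (N := N) (σ := ∀' ∀' (leF &0 &1 ⇔ ∃' (addT &2 &0 =' &1)))
    (by simp [PABase])
  simpa [Sentence.Realize, Formula.Realize, Fin.snoc] using h a b


lemma realize_substLastK {N : Type} [LA.Structure N] {k : ℕ}
    (φ : LA.BoundedFormula Empty (k + 1)) (t : LA.Term (Empty ⊕ Fin k))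
    (v : Empty → N) (xs : Fin k → N) :
    (substLastK φ t).Realize v xs ↔
      φ.Realize v (Fin.snoc xs (t.realize (Sum.elim v xs))) := by
  have hxs : (xs ∘ Fin.castAdd 0) = xs := by
    funext i; exact congrArg xs (Fin.ext rfl)
  rw [substLastK, BoundedFormula.realize_relabel, BoundedFormula.realize_subst]
  have hd : (xs ∘ Fin.natAdd k) = (default : Fin 0 → N) := funext fun i => i.elim0
  rw [hd]
  refine (BoundedFormula.realize_toFormula φ _).trans (iff_of_eq ?_)
  congr 1
  · funext e; exact e.elim
  · funext j
    show Term.realize (Sum.elim v (xs ∘ Fin.castAdd 0) ∘ id)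
      (if h : (j : ℕ) < k then Term.var (Sum.inr ⟨j, h⟩) else t) = _
    by_cases h : (j : ℕ) < k
    · rw [dif_pos h]
      have hj : j = Fin.castSucc ⟨(j : ℕ), h⟩ := Fin.ext rfl
      conv_rhs => rw [hj]
      rw [Fin.snoc_castSucc]
      simp [hxs]
    · rw [dif_neg h]
      have hj : j = Fin.last k := Fin.ext (by rw [Fin.val_last]; omega)
      conv_rhs => rw [hj]
      rw [Fin.snoc_last]
      simp [hxs]

lemma realize_substLastS {N : Type} [LA.Structure N] {k : ℕ}
    (φ : LA.BoundedFormula Empty (k + 1)) (t : LA.Term (Empty ⊕ Fin (k + 1)))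
    (v : Empty → N) (xs : Fin (k + 1) → N) :
    (substLastS φ t).Realize v xs ↔
      φ.Realize v (Fin.snoc (xs ∘ Fin.castSucc) (t.realize (Sum.elim v xs))) := by
  have hxs : (xs ∘ Fin.castAdd 0) = xs := by
    funext i; exact congrArg xs (Fin.ext rfl)
  rw [substLastS, BoundedFormula.realize_relabel, BoundedFormula.realize_subst]
  have hd : (xs ∘ Fin.natAdd (k + 1)) = (default : Fin 0 → N) := funext fun i => i.elim0
  rw [hd]
  refine (BoundedFormula.realize_toFormula φ _).trans (iff_of_eq ?_)
  congr 1
  · funext e; exact e.elim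
  · funext j
    show Term.realize (Sum.elim v (xs ∘ Fin.castAdd 0) ∘ id)
      (if (j : ℕ) < k then Term.var (Sum.inr j) else t) = _
    by_cases h : (j : ℕ) < k
    · rw [if_pos h]
      have hj : j = Fin.castSucc ⟨(j : ℕ), h⟩ := Fin.ext rfl
      conv_rhs => rw [hj]
      rw [Fin.snoc_castSucc]
      simp [hxs]
    · rw [if_neg h]
      have hj : j = Fin.last k := Fin.ext (by rw [Fin.val_last]; omega)
      conv_rhs => rw [hj]
      rw [Fin.snoc_last]
      simp [hxs]

section Fone

variable {N : Type} [LA.Structure N] [PAAxioms.Model N]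

lemma zero_or_succ (a : N) : a = mZ N ∨ ∃ b : N, a = mS b := by
  classical
  set φ₁ : LA.BoundedFormula Empty 1 :=
    (Term.var (Sum.inr 0) =' zeroT) ⊔ ∃' (Term.var (Sum.inr 0) =' sT (Term.var (Sum.inr 1))) with hφ₁
  have hmem : indAx 0 φ₁ ∈ PAAxioms := Set.mem_union_right _ ⟨0, φ₁, rfl⟩
  have h := pa_realize (N := N) hmem
  rw [indAx] at h
  have h' := (BoundedFormula.realize_alls.mp h) (default : Fin 0 → N)
  rw [BoundedFormula.realize_imp, BoundedFormula.realize_inf] at h'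
  have key : ∀ x : N, φ₁.Realize (default : Empty → N) (Fin.snoc default x) := by
    apply BoundedFormula.realize_all.mp
    apply h'
    constructor
    · rw [realize_substLastK]
      simp [hφ₁, Fin.snoc]
    · rw [BoundedFormula.realize_all]
      intro c
      rw [BoundedFormula.realize_imp, realize_substLastS]
      intro _
      simp [hφ₁, Fin.snoc]
  have := key a
  simpa [hφ₁, Fin.snoc] using this

lemma add_zero_left (a : N) : mAdd (mZ N) a = a → a = a := fun _ => rfl

lemma emb_add (m n : ℕ) : emb (m + n) = mAdd (emb m) (emb (N := N) n) := by
  induction n with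
  | zero => rw [Nat.add_zero]; exact (add_zero' (emb m)).symm
  | succ n ih =>
    show emb ((m + n) + 1) = mAdd (emb m) (mS (emb n))
    rw [add_succ']
    show mS (emb (m + n)) = mS (mAdd (emb m) (emb n))
    rw [ih]

lemma emb_mul (m n : ℕ) : emb (m * n) = mMul (emb m) (emb (N := N) n) := by
  induction n with
  | zero => rw [Nat.mul_zero]; exact (mul_zero' (emb m)).symm
  | succ n ih =>
    show emb (m * n + m) = mMul (emb m) (mS (emb n))
    rw [mul_succ', emb_add, ih]

lemma emb_inj : Function.Injective (emb (N := N)) := by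
  intro m n h
  induction m generalizing n with
  | zero =>
    cases n with
    | zero => rfl
    | succ n => exact absurd h.symm (succ_ne_zero (emb n))
  | succ m ih =>
    cases n with
    | zero => exact absurd h (succ_ne_zero (emb m))
    | succ n =>
      have := ih (n := n) (succ_inj h)
      omega

lemma add_eq_zero {z a : N} (h : mAdd z a = mZ N) : a = mZ N := by
  rcases zero_or_succ a with h0 | ⟨b, rfl⟩
  · exact h0
  · rw [add_succ'] at h
    exact absurd h (succ_ne_zero _)

lemma emb_initial (n : ℕ) (a : N) (h : mLe a (emb n)) : ∃ m, m ≤ n ∧ a = emb m := by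
  induction n generalizing a with
  | zero =>
    obtain ⟨z, hz⟩ := (le_iff' a (emb 0)).mp h
    exact ⟨0, le_refl 0, add_eq_zero hz⟩
  | succ n ih =>
    obtain ⟨z, hz⟩ := (le_iff' a (emb (n + 1))).mp h
    rcases zero_or_succ a with h0 | ⟨b, rfl⟩
    · exact ⟨0, Nat.zero_le _, h0⟩
    · rw [add_succ'] at hz
      have hz' : mAdd z b = emb n := succ_inj hz
      have hb : mLe b (emb n) := (le_iff' b (emb n)).mpr ⟨z, hz'⟩
      obtain ⟨m, hm, rfl⟩ := ih b hb
      exact ⟨m + 1, Nat.succ_le_succ hm, rfl⟩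

lemma emb_le_iff {m n : ℕ} : mLe (emb (N := N) m) (emb n) ↔ m ≤ n := by
  constructor
  · intro h
    obtain ⟨k, hk, he⟩ := emb_initial n (emb m) h
    rwa [emb_inj he]
  · intro h
    refine (le_iff' _ _).mpr ⟨emb (n - m), ?_⟩
    rw [← emb_add, Nat.sub_add_cancel h]

lemma term_emb {α : Type} (t : LA.Term α) (w : α → ℕ) :
    Term.realize (emb (N := N) ∘ w) t = emb (Term.realize w t) := by
  induction t with
  | var a => rfl
  | func f ts ih =>
    cases f with
    | zero =>
      rw [Term.realize_func, Term.realize_func]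
      have : ∀ (P : Type) [LA.Structure P] (v : Fin 0 → P),
          Structure.funMap (L := LA) ArithFunc.zero v = mZ P := by
        intro P _ v; rw [mZ]; congr 1; funext i; exact i.elim0
      rw [this, this]
      rfl
    | succ =>
      rw [Term.realize_func, Term.realize_func]
      show Structure.funMap (L := LA) ArithFunc.succ _ = emb (Structure.funMap (L := LA) ArithFunc.succ _)
      have : ∀ (P : Type) [LA.Structure P] (v : Fin 1 → P),
          Structure.funMap (L := LA) ArithFunc.succ v = mS (v 0) := by
        intro P _ v
        rw [mS]; congr 1; funext i; fin_cases i <;> rfl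
      rw [this, this]
      show mS (Term.realize (emb ∘ w) (ts 0)) = emb (Term.realize w (ts 0) + 1)
      rw [ih 0]
      rfl
    | add =>
      rw [Term.realize_func, Term.realize_func]
      have : ∀ (P : Type) [LA.Structure P] (v : Fin 2 → P),
          Structure.funMap (L := LA) ArithFunc.add v = mAdd (v 0) (v 1) := by
        intro P _ v
        rw [mAdd]; congr 1; funext i; fin_cases i <;> rfl
      rw [this, this]
      show mAdd (Term.realize (emb ∘ w) (ts 0)) (Term.realize (emb ∘ w) (ts 1)) =
        emb (Term.realize w (ts 0) + Term.realize w (ts 1))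
      rw [ih 0, ih 1, emb_add]
    | mul =>
      rw [Term.realize_func, Term.realize_func]
      have : ∀ (P : Type) [LA.Structure P] (v : Fin 2 → P),
          Structure.funMap (L := LA) ArithFunc.mul v = mMul (v 0) (v 1) := by
        intro P _ v
        rw [mMul]; congr 1; funext i; fin_cases i <;> rfl
      rw [this, this]
      show mMul (Term.realize (emb ∘ w) (ts 0)) (Term.realize (emb ∘ w) (ts 1)) =
        emb (Term.realize w (ts 0) * Term.realize w (ts 1))
      rw [ih 0, ih 1, emb_mul]

lemma elim_emb {α : Type} {n : ℕ} (v : α → ℕ) (xs : Fin n → ℕ) :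
    (Sum.elim (emb (N := N) ∘ v) (emb ∘ xs)) = emb ∘ Sum.elim v xs := by
  funext a; cases a <;> rfl

lemma snoc_emb {n : ℕ} (xs : Fin n → ℕ) (b : ℕ) :
    (Fin.snoc (emb (N := N) ∘ xs) (emb b)) = emb ∘ Fin.snoc xs b := by
  funext j
  refine Fin.lastCases ?_ (fun i => ?_) j
  · simp
  · simp

lemma rel_le_iff (P : Type) [LA.Structure P] (v : Fin 2 → P) :
    Structure.RelMap (L := LA) ArithRel.le v ↔ mLe (v 0) (v 1) := by
  rw [mLe]
  have : v = ![v 0, v 1] := funext fun i => by fin_cases i <;> rfl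
  conv_lhs => rw [this]

lemma elim_snoc_map {P : Type} {α : Type} {n : ℕ} (v : α → P) (xs : Fin n → P) (b : P) :
    (Sum.elim v (Fin.snoc xs b) ∘ Sum.map id Fin.castSucc) = Sum.elim v xs := by
  funext a
  cases a with
  | inl a => rfl
  | inr i => simp

lemma delta0_abs {α : Type} : ∀ {n : ℕ} {φ : LA.BoundedFormula α n}, IsDelta0 φ →
    ∀ (v : α → ℕ) (xs : Fin n → ℕ),
      φ.Realize v xs ↔ φ.Realize (emb (N := N) ∘ v) (emb ∘ xs) := by
  intro n φ h
  induction h with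
  | falsum => simp
  | equal t u =>
    intro v xs
    rw [BoundedFormula.realize_bdEqual, BoundedFormula.realize_bdEqual, elim_emb,
      term_emb, term_emb]
    exact ⟨fun h => by rw [h], fun h => emb_inj h⟩
  | rel R ts =>
    cases R
    intro v xs
    rw [BoundedFormula.realize_rel, BoundedFormula.realize_rel,
      rel_le_iff ℕ, rel_le_iff N]
    show Term.realize (Sum.elim v xs) _ ≤ Term.realize (Sum.elim v xs) _ ↔ _
    rw [elim_emb, term_emb, term_emb, emb_le_iff]
  | not h ih =>
    intro v xs
    rw [BoundedFormula.realize_not, BoundedFormula.realize_not, ih v xs]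
  | and h1 h2 ih1 ih2 =>
    intro v xs
    rw [BoundedFormula.realize_inf, BoundedFormula.realize_inf, ih1 v xs, ih2 v xs]
  | or h1 h2 ih1 ih2 =>
    intro v xs
    rw [BoundedFormula.realize_sup, BoundedFormula.realize_sup, ih1 v xs, ih2 v xs]
  | imp h1 h2 ih1 ih2 =>
    intro v xs
    rw [BoundedFormula.realize_imp, BoundedFormula.realize_imp, ih1 v xs, ih2 v xs]
  | @bdAll n' t φ' h ih =>
    intro v xs
    rw [BoundedFormula.realize_all, BoundedFormula.realize_all]
    have hbound : ∀ (P : Type) (_ : LA.Structure P) (w : α → P) (ys : Fin n' → P) (c : P),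
        (leF (Term.var (Sum.inr (Fin.last n'))) (t.relabel (Sum.map id Fin.castSucc))).Realize
          w (Fin.snoc ys c) ↔ mLe c (t.realize (Sum.elim w ys)) := by
      intro P _ w ys c
      rw [realize_leF]
      rw [show Term.realize (Sum.elim w (Fin.snoc ys c)) (Term.var (Sum.inr (Fin.last n'))) =
        c by simp]
      rw [Term.realize_relabel, elim_snoc_map]
    constructor
    · intro hyp c
      rw [BoundedFormula.realize_imp, hbound N _ _ _ c, elim_emb, term_emb]
      intro hc
      obtain ⟨m, hm, rfl⟩ := emb_initial _ c hc
      rw [snoc_emb]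
      have h2 := hyp m
      rw [BoundedFormula.realize_imp, hbound ℕ _ _ _ m] at h2
      exact (ih v _).mp (h2 hm)
    · intro hyp b
      rw [BoundedFormula.realize_imp, hbound ℕ _ _ _ b]
      intro hb
      have h2 := hyp (emb b)
      rw [BoundedFormula.realize_imp, hbound N _ _ _ (emb b), elim_emb, term_emb,
        emb_le_iff] at h2
      have h3 := h2 hb
      rw [snoc_emb] at h3
      exact (ih v _).mpr h3
  | @bdEx n' t φ' h ih =>
    intro v xs
    rw [BoundedFormula.realize_ex, BoundedFormula.realize_ex]
    have hbound : ∀ (P : Type) (_ : LA.Structure P) (w : α → P) (ys : Fin n' → P) (c : P),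
        (leF (Term.var (Sum.inr (Fin.last n'))) (t.relabel (Sum.map id Fin.castSucc))).Realize
          w (Fin.snoc ys c) ↔ mLe c (t.realize (Sum.elim w ys)) := by
      intro P _ w ys c
      rw [realize_leF]
      rw [show Term.realize (Sum.elim w (Fin.snoc ys c)) (Term.var (Sum.inr (Fin.last n'))) =
        c by simp]
      rw [Term.realize_relabel, elim_snoc_map]
    constructor
    · intro hyp
      obtain ⟨b, hb⟩ := hyp
      rw [BoundedFormula.realize_inf, hbound ℕ _ _ _ b] at hb
      refine ⟨emb b, ?_⟩
      rw [BoundedFormula.realize_inf, hbound N _ _ _ (emb b), elim_emb, term_emb, emb_le_iff,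
        snoc_emb]
      exact ⟨hb.1, (ih v _).mp hb.2⟩
    · intro hyp
      obtain ⟨c, hc⟩ := hyp
      rw [BoundedFormula.realize_inf, hbound N _ _ _ c, elim_emb, term_emb] at hc
      obtain ⟨m, hm, rfl⟩ := emb_initial _ c hc.1
      refine ⟨m, ?_⟩
      rw [BoundedFormula.realize_inf, hbound ℕ _ _ _ m]
      have h3 := hc.2
      rw [snoc_emb] at h3
      exact ⟨hm, (ih v _).mpr h3⟩

lemma sigma0_delta0 {α : Type} {n : ℕ} {φ : LA.BoundedFormula α n}
    (h : IsSigma 0 φ) : IsDelta0 φ := by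
  cases h with
  | delta0 h => exact h

lemma pi0_delta0 {α : Type} {n : ℕ} {φ : LA.BoundedFormula α n}
    (h : IsPi 0 φ) : IsDelta0 φ := by
  cases h with
  | delta0 h => exact h

theorem sigma_up {α : Type} {k n : ℕ} {φ : LA.BoundedFormula α n} (h : IsSigma k φ) :
    k ≤ 1 → ∀ (v : α → ℕ) (xs : Fin n → ℕ),
      φ.Realize v xs → φ.Realize (emb (N := N) ∘ v) (emb ∘ xs) := by
  induction h using IsSigma.rec
    (motive_2 := fun k {n} φ _ => k ≤ 1 → ∀ (v : α → ℕ) (xs : Fin n → ℕ),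
      φ.Realize (emb (N := N) ∘ v) (emb ∘ xs) → φ.Realize v xs)
  · rename_i a
    intro _ v xs
    exact (delta0_abs a v xs).mp
  · rename_i a ih
    intro hk
    exact ih (by omega)
  · rename_i k _ _ a ih
    intro hk
    have hk0 : k = 0 := by omega
    subst hk0
    intro v xs
    exact (delta0_abs (pi0_delta0 a) v xs).mp
  · rename_i a a1 ih ih1
    intro hk v xs h
    rw [BoundedFormula.realize_inf] at h ⊢
    exact ⟨ih hk v xs h.1, ih1 hk v xs h.2⟩
  · rename_i a a1 ih ih1
    intro hk v xs h
    rw [BoundedFormula.realize_sup] at h ⊢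
    rcases h with h | h
    · exact Or.inl (ih hk v xs h)
    · exact Or.inr (ih1 hk v xs h)
  · rename_i a ih
    intro hk v xs h
    rw [BoundedFormula.realize_ex] at h ⊢
    obtain ⟨b, hb⟩ := h
    refine ⟨emb b, ?_⟩
    rw [snoc_emb]
    exact ih hk v _ hb
  · rename_i a ih
    intro hk v xs h
    rw [BoundedFormula.realize_not] at h ⊢
    exact fun hm => h (ih hk v xs hm)
  · rename_i a a1 ihp ihs
    intro hk v xs h
    rw [BoundedFormula.realize_imp] at h ⊢
    exact fun hm => ihs hk v xs (h (ihp hk v xs hm))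
  · rename_i a
    intro _ v xs
    exact (delta0_abs a v xs).mpr
  · rename_i k _ _ a ih
    intro hk
    have hk0 : k = 0 := by omega
    subst hk0
    intro v xs
    exact (delta0_abs (sigma0_delta0 a) v xs).mpr
  · rename_i a ih
    intro hk
    exact ih (by omega)
  · rename_i a a1 ih ih1
    intro hk v xs h
    rw [BoundedFormula.realize_inf] at h ⊢
    exact ⟨ih hk v xs h.1, ih1 hk v xs h.2⟩
  · rename_i a a1 ih ih1
    intro hk v xs h
    rw [BoundedFormula.realize_sup] at h ⊢
    rcases h with h | h
    · exact Or.inl (ih hk v xs h)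
    · exact Or.inr (ih1 hk v xs h)
  · rename_i a ih hk v xs h
    rw [BoundedFormula.realize_all] at h ⊢
    intro b
    have hb := h (emb b)
    rw [snoc_emb] at hb
    exact ih hk v _ hb
  · rename_i a ih
    intro hk v xs h
    rw [BoundedFormula.realize_not] at h ⊢
    exact fun hn => h (ih hk v xs hn)
  · rename_i a a1 ihs ihp
    intro hk v xs h
    rw [BoundedFormula.realize_imp] at h ⊢
    exact fun hphi => ihp hk v xs (h (ihs hk v xs hphi))

theorem pi_down {α : Type} {k n : ℕ} {φ : LA.BoundedFormula α n} (h : IsPi k φ) :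
    k ≤ 1 → ∀ (v : α → ℕ) (xs : Fin n → ℕ),
      φ.Realize (emb (N := N) ∘ v) (emb ∘ xs) → φ.Realize v xs := by
  induction h using IsPi.rec
    (motive_1 := fun k {n} φ _ => k ≤ 1 → ∀ (v : α → ℕ) (xs : Fin n → ℕ),
      φ.Realize v xs → φ.Realize (emb (N := N) ∘ v) (emb ∘ xs))
  · rename_i d0 hk v xs h
    exact (delta0_abs d0 v xs).mp h
  · rename_i a ih hk v xs h
    exact ih (by omega) v xs h
  · rename_i k0 n0 phi0 a ih hk v xs h
    have hk0 : k0 = 0 := by omega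
    subst hk0
    exact (delta0_abs (pi0_delta0 a) v xs).mp h
  · rename_i a a1 ih ih1 hk v xs h
    rw [BoundedFormula.realize_inf] at h ⊢
    exact ⟨ih hk v xs h.1, ih1 hk v xs h.2⟩
  · rename_i a a1 ih ih1 hk v xs h
    rw [BoundedFormula.realize_sup] at h ⊢
    rcases h with h | h
    · exact Or.inl (ih hk v xs h)
    · exact Or.inr (ih1 hk v xs h)
  · rename_i a ih hk v xs h
    rw [BoundedFormula.realize_ex] at h ⊢
    obtain ⟨b, hb⟩ := h
    refine ⟨emb b, ?_⟩
    rw [snoc_emb]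
    exact ih hk v _ hb
  · rename_i a ih hk v xs h
    rw [BoundedFormula.realize_not] at h ⊢
    exact fun hm => h (ih hk v xs hm)
  · rename_i a a1 ihp ihs hk v xs h
    rw [BoundedFormula.realize_imp] at h ⊢
    exact fun hm => ihs hk v xs (h (ihp hk v xs hm))
  · rename_i d0 hk v xs h
    exact (delta0_abs d0 v xs).mpr h
  · rename_i k0 n0 phi0 a ih hk v xs h
    have hk0 : k0 = 0 := by omega
    subst hk0
    exact (delta0_abs (sigma0_delta0 a) v xs).mpr h
  · rename_i a ih hk v xs h
    exact ih (by omega) v xs h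
  · rename_i a a1 ih ih1 hk v xs h
    rw [BoundedFormula.realize_inf] at h ⊢
    exact ⟨ih hk v xs h.1, ih1 hk v xs h.2⟩
  · rename_i a a1 ih ih1 hk v xs h
    rw [BoundedFormula.realize_sup] at h ⊢
    rcases h with h | h
    · exact Or.inl (ih hk v xs h)
    · exact Or.inr (ih1 hk v xs h)
  · rename_i a ih
    intro hk v xs h
    rw [BoundedFormula.realize_all] at h ⊢
    intro b
    have hb := h (emb b)
    rw [snoc_emb] at hb
    exact ih hk v _ hb
  · rename_i a ih hk v xs h
    rw [BoundedFormula.realize_not] at h ⊢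
    exact fun hn => h (ih hk v xs hn)
  · rename_i a a1 ihs ihp hk v xs h
    rw [BoundedFormula.realize_imp] at h ⊢
    exact fun hphi => ihp hk v xs (h (ihs hk v xs hphi))

end Fone

end PAmodel


/-! #### Sentence level realization helpers -/

section SentHelp

variable {N : Type} [LA.Structure N]

lemma sent_imp (σ τ : LA.Sentence) : N ⊨ (σ ⟹ τ) ↔ (N ⊨ σ → N ⊨ τ) := by
  rw [Sentence.Realize, Formula.Realize, BoundedFormula.realize_imp]
  exact Iff.rfl

lemma sent_sup (σ τ : LA.Sentence) : N ⊨ (σ ⊔ τ) ↔ (N ⊨ σ ∨ N ⊨ τ) := by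
  rw [Sentence.Realize, Formula.Realize, BoundedFormula.realize_sup]
  exact Iff.rfl

lemma sent_iff (σ τ : LA.Sentence) : N ⊨ (σ ⇔ τ) ↔ (N ⊨ σ ↔ N ⊨ τ) := by
  rw [Sentence.Realize, Formula.Realize, BoundedFormula.realize_iff]
  exact Iff.rfl

lemma sent_not (σ : LA.Sentence) : N ⊨ (∼σ) ↔ ¬ (N ⊨ σ) := by
  rw [Sentence.Realize, Formula.Realize, BoundedFormula.realize_not]
  exact Iff.rfl

lemma realize_ProvInst (P : LA.Formula (Fin 2)) (c : ℕ) :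
    N ⊨ ProvInst P c ↔ ∃ a : N, P.Realize ![emb c, a] := by
  rw [ProvInst, Sentence.Realize, Formula.Realize, BoundedFormula.realize_ex]
  apply exists_congr
  intro a
  rw [PrfInst, instF, BoundedFormula.realize_relabel, BoundedFormula.realize_subst]
  have hrw : Formula.Realize P ![emb c, a] =
      BoundedFormula.Realize P ![emb c, a] (default : Fin 0 → N) := rfl
  rw [hrw]
  apply iff_of_eq
  congr 1
  · funext i
    fin_cases i
    · simp
    · simp [Fin.snoc]
  · funext i
    exact i.elim0

end SentHelp

/-! #### Condition D1 -/

theorem D1 {T : LA.Theory} (hT : PAAxioms ⊆ T) {Prf : LA.Formula (Fin 2)}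
    (hPrf : IsProofPredicate T Prf) {χ : LA.Sentence} (h : Prv T χ) :
    Prv T (ProvS Prf χ) := by
  have hN : ℕ ⊨ ProvInst Prf (gnum ⟨0, χ⟩) := (hPrf.represents χ).mp h
  obtain ⟨m, hm⟩ := (realize_ProvInst Prf (gnum ⟨0, χ⟩)).mp hN
  rw [show emb (N := ℕ) (gnum ⟨0, χ⟩) = gnum ⟨0, χ⟩ from emb_nat _] at hm
  apply prv_of
  intro M _ _ hM
  haveI hMP : M ⊨ PAAxioms := Theory.Model.mono hM hT
  show M ⊨ ProvInst Prf (gnum ⟨0, χ⟩)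
  apply (realize_ProvInst Prf _).mpr
  refine ⟨emb m, ?_⟩
  have hm' := hm
  unfold Formula.Realize at hm'
  have hm2 : BoundedFormula.Realize Prf ![gnum ⟨0, χ⟩, m] (fun i : Fin 0 => i.elim0) := by
    convert hm' using 2
  have hup := sigma_up (N := M) hPrf.sigma1 (le_refl 1)
    (![gnum ⟨0, χ⟩, m]) _ hm2
  have henv : (emb (N := M) ∘ ![gnum ⟨0, χ⟩, m]) = ![emb (gnum ⟨0, χ⟩), emb m] := by
    funext i; fin_cases i <;> rfl
  rw [henv] at hup
  show Prf.Realize ![emb (gnum ⟨0, χ⟩), emb m]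
  unfold Formula.Realize
  convert hup using 2



/-! #### Finite lists of sentences: implications and disjunctions -/

def imps : List LA.Sentence → LA.Sentence → LA.Sentence
  | [], c => c
  | φ :: l, c => φ ⟹ imps l c

def ors (γ : LA.Sentence) (Pr : LA.Sentence → LA.Sentence) : List LA.Sentence → LA.Sentence
  | [] => γ
  | ψ :: c => Pr ψ ⊔ ors γ Pr c

lemma realize_imps {N : Type} [LA.Structure N] (l : List LA.Sentence) (c : LA.Sentence) :
    N ⊨ imps l c ↔ ((∀ φ ∈ l, N ⊨ φ) → N ⊨ c) := by
  induction l with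
  | nil => simp [imps]
  | cons φ l ih =>
    rw [imps, sent_imp, ih]
    constructor
    · intro h hall
      exact h (hall φ (List.mem_cons_self)) fun ψ hψ => hall ψ (List.mem_cons_of_mem _ hψ)
    · intro h hφ hall
      refine h fun ψ hψ => ?_
      rcases List.mem_cons.mp hψ with rfl | h'
      · exact hφ
      · exact hall ψ h'

lemma realize_ors {N : Type} [LA.Structure N] (γ : LA.Sentence) (Pr : LA.Sentence → LA.Sentence)
    (c : List LA.Sentence) :
    N ⊨ ors γ Pr c ↔ (N ⊨ γ ∨ ∃ ψ ∈ c, N ⊨ Pr ψ) := by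
  induction c with
  | nil => simp [ors]
  | cons ψ c ih =>
    rw [ors, sent_sup, ih]
    constructor
    · rintro (h | h | ⟨χ, hχ, hh⟩)
      · exact Or.inr ⟨ψ, List.mem_cons_self, h⟩
      · exact Or.inl h
      · exact Or.inr ⟨χ, List.mem_cons_of_mem _ hχ, hh⟩
    · rintro (h | ⟨χ, hχ, hh⟩)
      · exact Or.inr (Or.inl h)
      · rcases List.mem_cons.mp hχ with rfl | h'
        · exact Or.inl hh
        · exact Or.inr (Or.inr ⟨χ, h', hh⟩)

lemma gammaT_self {T : LA.Theory} {Γ : Set LA.Sentence} {γ : LA.Sentence} (hγ : γ ∈ Γ) :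
    γ ∈ GammaT T Γ := by
  refine ⟨γ, hγ, ?_⟩
  apply prv_of
  intro N _ _ _
  exact (sent_iff γ γ).mpr Iff.rfl

lemma ors_mem {T : LA.Theory} {Θ Γ : Set LA.Sentence} {Prf : LA.Formula (Fin 2)}
    (hΘ : ∀ φ : LA.Sentence, ProvS Prf φ ∈ GammaT T Θ)
    (hΘΓ : GammaT T Θ ⊆ GammaT T Γ)
    (hdisj : ∀ φ ψ : LA.Sentence, φ ∈ GammaT T Γ → ψ ∈ GammaT T Γ → (φ ⊔ ψ) ∈ GammaT T Γ)
    {γ : LA.Sentence} (hγ : γ ∈ Γ) (c : List LA.Sentence) :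
    ors γ (ProvS Prf) c ∈ GammaT T Γ := by
  induction c with
  | nil => exact gammaT_self hγ
  | cons ψ c ih => exact hdisj _ _ (hΘΓ (hΘ ψ)) ih

end ConsAux


/-! ## STATEMENT 1
If `Pr_T(x)` is a provability predicate of `T` (i.e. `∃y Prf_T(x,y)` for a proof
predicate `Prf_T` of `T`) satisfying D2, every sentence `Pr_T(⌜φ⌝)` is in `Θ(T)`,
`Θ(T) ⊆ Γ(T)`, and `Γ(T)` is closed under disjunction, then `T + Rfn(Pr_T)` is
Γ-conservative over `T + Rfn_Γ(Pr_T)`. -/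
theorem generalized_conservation_theorem
    (T : LA.Theory) (hT : PAAxioms ⊆ T) (hcons : ¬ Prv T (⊥ : LA.Sentence))
    (Prf : LA.Formula (Fin 2)) (hPrf : IsProofPredicate T Prf)
    (hD2 : CondD2 T (PrAt Prf))
    (Θ Γ : Set LA.Sentence)
    (hΘ : ∀ φ : LA.Sentence, ProvS Prf φ ∈ GammaT T Θ)
    (hΘΓ : GammaT T Θ ⊆ GammaT T Γ)
    (hdisj : ∀ φ ψ : LA.Sentence, φ ∈ GammaT T Γ → ψ ∈ GammaT T Γ → (φ ⊔ ψ) ∈ GammaT T Γ) :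
    ConservOver Γ (T ∪ RfnAll (ProvS Prf)) (T ∪ Rfn (ProvS Prf) Γ) := by
  intro γ hγ hprv
  classical
  -- Step 1: compactness, extract a finite set of reflection axioms
  have hsat : ¬ Theory.IsSatisfiable (T ∪ RfnAll (ProvS Prf) ∪ {∼γ}) := by
    rintro ⟨M⟩
    have hMsub : (M : Type) ⊨ (T ∪ RfnAll (ProvS Prf)) :=
      Theory.Model.mono M.is_model Set.subset_union_left
    have h1 : (M : Type) ⊨ γ := ConsAux.prv_apply hprv M hMsub
    have h2 : (M : Type) ⊨ (∼γ) :=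
      Theory.realize_sentence_of_mem (T ∪ RfnAll (ProvS Prf) ∪ {∼γ})
        (Set.mem_union_right _ (Set.mem_singleton _))
    exact (ConsAux.sent_not γ).mp h2 h1
  rw [Theory.isSatisfiable_iff_isFinitelySatisfiable, Theory.IsFinitelySatisfiable] at hsat
  push_neg at hsat
  obtain ⟨F, hFsub, hFnsat⟩ := hsat
  set R₀ : LA.Theory := RfnAll (ProvS Prf) ∩ ↑F with hR₀
  have hR₀sub : R₀ ⊆ RfnAll (ProvS Prf) := Set.inter_subset_left
  have hR₀fin : R₀.Finite := Set.Finite.subset F.finite_toSet Set.inter_subset_right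
  have hR₀prv : Prv (T ∪ R₀) γ := by
    apply ConsAux.prv_of
    intro N _ _ hN
    by_contra hnγ
    apply hFnsat
    haveI : N ⊨ (↑F : LA.Theory) := by
      rw [Theory.model_iff]
      intro σ hσ
      rcases hFsub hσ with (hT' | hRf) | hsing
      · haveI := hN
        exact Theory.realize_sentence_of_mem (T ∪ R₀) (Set.mem_union_left _ hT')
      · haveI := hN
        exact Theory.realize_sentence_of_mem (T ∪ R₀)
          (Set.mem_union_right _ ⟨hRf, hσ⟩)
      · rcases hsing with rfl
        exact (ConsAux.sent_not γ).mpr hnγ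
    exact ⟨Theory.ModelType.of _ N⟩
  -- Step 2: extract the list of reflected sentences
  have hlist : ∀ (R : Set LA.Sentence), R.Finite → R ⊆ RfnAll (ProvS Prf) →
      ∃ l : List LA.Sentence, ∀ σ ∈ R, ∃ φ ∈ l, σ = (ProvS Prf φ ⟹ φ) := by
    intro R hfin
    refine Set.Finite.induction_on (motive := fun R _ => R ⊆ RfnAll (ProvS Prf) →
        ∃ l : List LA.Sentence, ∀ σ ∈ R, ∃ φ ∈ l, σ = (ProvS Prf φ ⟹ φ)) R hfin ?_ ?_
    · intro _; exact ⟨[], by simp⟩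
    · intro σ R' hσR' hR'fin ih hsub
      obtain ⟨l, hl⟩ := ih fun x hx => hsub (Set.mem_insert_of_mem _ hx)
      have hσ : σ ∈ RfnAll (ProvS Prf) := hsub (Set.mem_insert _ _)
      obtain ⟨n, hn, φ, hφ, rfl⟩ := hσ
      refine ⟨φ :: l, ?_⟩
      intro τ hτ
      rcases hτ with rfl | hτR'
      · exact ⟨φ, List.mem_cons_self, rfl⟩
      · obtain ⟨χ, hχ, rfl⟩ := hl τ hτR'
        exact ⟨χ, List.mem_cons_of_mem _ hχ, rfl⟩
  obtain ⟨l, hl⟩ := hlist R₀ hR₀fin hR₀sub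
  -- Step 3: the hypothesis in semantic form
  have H : ∀ (N : Type) [LA.Structure N] [Nonempty N], N ⊨ T →
      (∀ φ ∈ l, N ⊨ (ProvS Prf φ ⟹ φ)) → N ⊨ γ := by
    intro N _ _ hNT hrefl
    refine ConsAux.prv_apply hR₀prv N ?_
    rw [Theory.model_iff]
    intro σ hσ
    rcases hσ with hσT | hσR
    · haveI := hNT
      exact Theory.realize_sentence_of_mem T hσT
    · obtain ⟨φ, hφl, rfl⟩ := hl σ hσR
      exact hrefl φ hφl
  -- Step 4: main recursion
  have main : ∀ (k : ℕ) (c S : List LA.Sentence), c.length ≤ k →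
      (∀ φ ∈ l, φ ∈ S ∨ φ ∈ c) →
      ∀ (N : Type) [LA.Structure N] [Nonempty N], N ⊨ (T ∪ Rfn (ProvS Prf) Γ) →
        (∀ φ ∈ S, N ⊨ ProvS Prf φ) → N ⊨ γ := by
    intro k
    induction k using Nat.strong_induction_on with
    | _ k IH =>
    intro c S hlen hcov N instS instN hNU hS
    have hNT : N ⊨ T := Theory.Model.mono hNU Set.subset_union_left
    obtain ⟨κ', hκ'Γ, hκiff⟩ := ConsAux.ors_mem hΘ hΘΓ hdisj hγ c
    -- base provability in T
    have hbase : Prv T (ConsAux.imps S κ') := by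
      apply ConsAux.prv_of
      intro N' _ _ hN'T
      rw [ConsAux.realize_imps]
      intro hallS
      have hκiff' := (ConsAux.sent_iff _ _).mp (ConsAux.prv_apply hκiff N' hN'T)
      by_cases hex : ∃ ψ ∈ c, N' ⊨ ProvS Prf ψ
      · exact hκiff'.mp ((ConsAux.realize_ors _ _ _).mpr (Or.inr hex))
      · push_neg at hex
        have hγR : N' ⊨ γ := by
          refine H N' hN'T ?_
          intro φ hφ
          rw [ConsAux.sent_imp]
          rcases hcov φ hφ with hS' | hc
          · exact fun _ => hallS φ hS'
          · exact fun hPr => absurd hPr (hex φ hc)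
        exact hκiff'.mp ((ConsAux.realize_ors _ _ _).mpr (Or.inl hγR))
    have hD1 : Prv T (ProvS Prf (ConsAux.imps S κ')) := ConsAux.D1 hT hPrf hbase
    have hPrImps : N ⊨ ProvS Prf (ConsAux.imps S κ') := ConsAux.prv_apply hD1 N hNT
    -- chaining D2
    have chain : ∀ (S' : List LA.Sentence), (∀ φ ∈ S', N ⊨ ProvS Prf φ) →
        ∀ (ψ : LA.Sentence), N ⊨ ProvS Prf (ConsAux.imps S' ψ) → N ⊨ ProvS Prf ψ := by
      intro S'
      induction S' with
      | nil => intro _ ψ h; exact h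
      | cons φ S' ih =>
        intro hall ψ h
        have d2 : N ⊨ (ProvS Prf (φ ⟹ ConsAux.imps S' ψ) ⟹
            (ProvS Prf φ ⟹ ProvS Prf (ConsAux.imps S' ψ))) :=
          ConsAux.prv_apply (hD2 0 φ (ConsAux.imps S' ψ)) N hNT
        have d2' := (ConsAux.sent_imp _ _).mp d2 h
        have d2'' := (ConsAux.sent_imp _ _).mp d2' (hall φ (List.mem_cons_self))
        exact ih (fun χ hχ => hall χ (List.mem_cons_of_mem _ hχ)) ψ d2''
    have hκ'Pr : N ⊨ ProvS Prf κ' := chain S hS κ' hPrImps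
    -- reflection instance for κ'
    have hrefl : N ⊨ (ProvS Prf κ' ⟹ κ') := by
      haveI := hNU
      exact Theory.realize_sentence_of_mem (T ∪ Rfn (ProvS Prf) Γ)
        (Set.mem_union_right _ ⟨κ', hκ'Γ, rfl⟩)
    have hκ' : N ⊨ κ' := (ConsAux.sent_imp _ _).mp hrefl hκ'Pr
    have hκR : N ⊨ ConsAux.ors γ (ProvS Prf) c :=
      ((ConsAux.sent_iff _ _).mp (ConsAux.prv_apply hκiff N hNT)).mpr hκ'
    rcases (ConsAux.realize_ors _ _ _).mp hκR with hγR | ⟨ψ, hψc, hPrψ⟩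
    · exact hγR
    · obtain ⟨c1, c2, rfl⟩ := List.append_of_mem hψc
      have hlt : (c1 ++ c2).length < k := by
        have := hlen
        simp only [List.length_append, List.length_cons] at this ⊢
        omega
      refine IH (c1 ++ c2).length hlt (c1 ++ c2) (ψ :: S) (le_refl _) ?_ N hNU ?_
      · intro φ hφ
        rcases hcov φ hφ with hS' | hc
        · exact Or.inl (List.mem_cons_of_mem _ hS')
        · rcases List.mem_append.mp hc with h1 | h2
          · exact Or.inr (List.mem_append.mpr (Or.inl h1))
          · rcases List.mem_cons.mp h2 with rfl | h3
            · exact Or.inl (List.mem_cons_self)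
            · exact Or.inr (List.mem_append.mpr (Or.inr h3))
      · intro φ hφ
        rcases List.mem_cons.mp hφ with rfl | h'
        · exact hPrψ
        · exact hS φ h'
  -- Conclusion
  apply ConsAux.prv_of
  intro N _ _ hNU
  exact main l.length l [] (le_refl _) (fun φ hφ => Or.inr hφ) N hNU (by simp)
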